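/- Let X be a real normed linear space, x₁,…,xₙ ∈ X, a ∈ X with a ≠ 0, and p₁,…,pₙ ≥ 0 with Σⱼ pⱼ = 1. Then ‖Σⱼ pⱼ•xⱼ‖·‖a‖ + (1/2)·Σⱼ pⱼ‖xⱼ − a‖² ≥ (1/2)‖a‖². -/

import Mathlib

theorem stmt4 {X : Type*} [NormedAddCommGroup X] [NormedSpace ℝ X]
    (n : ℕ) (x : Fin n → X) (a : X) (ha : a ≠ 0)
    (p : Fin n → ℝ) (hp : ∀ j, 0 ≤ p j) (hp1 : ∑ j, p j = 1) :
    ‖∑ j, p j • x j‖ * ‖a‖ + (1 / 2) * ∑ j, p j * ‖x j - a‖ ^ 2 ≥ (1 / 2) * ‖a‖ ^ 2 := by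
  set m := ∑ j, p j • x j with hm
  have h1 : ‖m - a‖ ≤ ∑ j, p j * ‖x j - a‖ := by
    have : m - a = ∑ j, p j • (x j - a) := by
      simp [hm, smul_sub, Finset.sum_sub_distrib, ← Finset.sum_smul, hp1]
    rw [this]
    refine (norm_sum_le _ _).trans_eq ?_
    refine Finset.sum_congr rfl fun j _ => ?_
    rw [norm_smul, Real.norm_eq_abs, abs_of_nonneg (hp j)]
  have h2 : (∑ j, p j * ‖x j - a‖) ^ 2 ≤ ∑ j, p j * ‖x j - a‖ ^ 2 := by
    have := Real.pow_arith_mean_le_arith_mean_pow Finset.univ p (fun j => ‖x j - a‖)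
      (fun i _ => hp i) hp1 (fun i _ => norm_nonneg _) 2
    simpa using this
  have h3 : ‖m - a‖ ^ 2 ≤ ∑ j, p j * ‖x j - a‖ ^ 2 :=
    le_trans (pow_le_pow_left₀ (norm_nonneg _) h1 2) h2
  have h6 : (‖a‖ - ‖m‖) ^ 2 ≤ ‖m - a‖ ^ 2 := by
    have h7 : |‖a‖ - ‖m‖| ≤ ‖a - m‖ := abs_norm_sub_norm_le a m
    rw [← sq_abs]
    rw [show ‖m - a‖ = ‖a - m‖ from norm_sub_rev m a]
    exact pow_le_pow_left₀ (abs_nonneg _) h7 2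
  nlinarith [sq_nonneg ‖m‖]
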